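/- Let G = K_{n_1, …, n_m} be a complete multipartite graph with m ≥ 2 parts and total order N = Σ n_i. Then d(G) = N − 1 if all parts have size 1, or if m = 2 and some part has size 1; otherwise d(G) = N − 2. -/

import Mathlib

open Finset in
/-- One stage of the deduction game.  The state is a pair `(P, F)` where `P` is the set of
protected vertices and `F` is the set of vertices whose initial searchers have already fired
(moved).  A vertex `v` is fireable if it is occupied, has not yet fired, and the number of
searchers on it (in the initial layout `L`) is at least its number of unprotected neighbours.
All fireable vertices fire simultaneously: one searcher moves to each unprotected neighbour,
which thereby becomes protected. -/
def dedStep {V : Type*} [Fintype V] [DecidableEq V] (G : SimpleGraph V) [DecidableRel G.Adj]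
    (L : V → ℕ) (s : Finset V × Finset V) : Finset V × Finset V :=
  let fire : Finset V := univ.filter (fun v =>
    0 < L v ∧ v ∉ s.2 ∧ (univ.filter (fun u => G.Adj v u ∧ u ∉ s.1)).card ≤ L v)
  (s.1 ∪ fire.biUnion (fun v => univ.filter (fun u => G.Adj v u ∧ u ∉ s.1)), s.2 ∪ fire)

open Finset in
/-- A layout `L` (assigning a number of searchers to each vertex) is successful if, starting
from the initially occupied vertices being protected and no vertex having fired, iterating the
deduction stages eventually protects every vertex. -/
def DedSuccessful {V : Type*} [Fintype V] [DecidableEq V] (G : SimpleGraph V)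
    [DecidableRel G.Adj] (L : V → ℕ) : Prop :=
  ∃ k : ℕ, ((dedStep G L)^[k] (univ.filter (fun v => 0 < L v), ∅)).1 = univ

/-- The deduction number of `G`: the minimum number of searchers in a successful layout. -/
noncomputable def deductionNumber {V : Type*} [Fintype V] (G : SimpleGraph V) : ℕ :=
  letI := Classical.decEq V
  letI := Classical.decRel G.Adj
  sInf {n | ∃ L : V → ℕ, (∑ v, L v) = n ∧ DedSuccessful G L}

open Finset
set_option linter.unusedSectionVars false
set_option maxHeartbeats 1000000

section
variable {m : ℕ} {n : Fin m → ℕ}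
  [DecidableEq ((i : Fin m) × Fin (n i))]
  [DecidableRel (SimpleGraph.completeMultipartiteGraph (fun i : Fin m => Fin (n i))).Adj]
  (L : ((i : Fin m) × Fin (n i)) → ℕ)

local notation "G" => SimpleGraph.completeMultipartiteGraph (fun i : Fin m => Fin (n i))

lemma adj_iff (v w : (i : Fin m) × Fin (n i)) :
    (SimpleGraph.completeMultipartiteGraph (fun i : Fin m => Fin (n i))).Adj v w ↔ v.1 ≠ w.1 := by
  simp [SimpleGraph.comap_adj]

def Pk (k : ℕ) : Finset ((i : Fin m) × Fin (n i)) :=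
  ((dedStep G L)^[k] (univ.filter (fun v => 0 < L v), ∅)).1

def Fk (k : ℕ) : Finset ((i : Fin m) × Fin (n i)) :=
  ((dedStep G L)^[k] (univ.filter (fun v => 0 < L v), ∅)).2

def nbrU (P : Finset ((i : Fin m) × Fin (n i))) (v : (i : Fin m) × Fin (n i)) :
    Finset ((i : Fin m) × Fin (n i)) :=
  univ.filter (fun u => (SimpleGraph.completeMultipartiteGraph (fun i : Fin m => Fin (n i))).Adj v u ∧ u ∉ P)

def FireS (k : ℕ) : Finset ((i : Fin m) × Fin (n i)) :=
  univ.filter (fun v => 0 < L v ∧ v ∉ Fk L k ∧ (nbrU (Pk L k) v).card ≤ L v)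

lemma Pk_succ (k : ℕ) :
    Pk L (k+1) = Pk L k ∪ (FireS L k).biUnion (fun v => nbrU (Pk L k) v) := by
  simp only [Pk, Fk, FireS, nbrU, Function.iterate_succ_apply', dedStep]
  rfl

lemma Fk_succ (k : ℕ) : Fk L (k+1) = Fk L k ∪ FireS L k := by
  simp only [Pk, Fk, FireS, nbrU, Function.iterate_succ_apply', dedStep]
  rfl

lemma mem_Pk_zero (u : (i : Fin m) × Fin (n i)) : u ∈ Pk L 0 ↔ 0 < L u := by
  simp [Pk]

lemma Pk_subset_succ (k : ℕ) : Pk L k ⊆ Pk L (k+1) := by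
  rw [Pk_succ]; exact subset_union_left

lemma Pk_mono {j k : ℕ} (h : j ≤ k) : Pk L j ⊆ Pk L k := by
  induction k with
  | zero => simp [Nat.le_zero.mp h]
  | succ k ih =>
    rcases Nat.lt_or_ge j (k+1) with h' | h'
    · exact (ih (Nat.lt_succ_iff.mp h')).trans (Pk_subset_succ L k)
    · have : j = k + 1 := le_antisymm h h'
      simp [this]

lemma Pk_const_of (t : ℕ) (h : ∀ s < t, Pk L (s+1) = Pk L s) : Pk L t = Pk L 0 := by
  induction t with
  | zero => rfl
  | succ t ih =>
    rw [h t (Nat.lt_succ_self t), ih (fun s hs => h s (hs.trans (Nat.lt_succ_self t)))]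

lemma exists_firer {k : ℕ} {u : (i : Fin m) × Fin (n i)} (h1 : u ∈ Pk L (k+1)) (h2 : u ∉ Pk L k) :
    ∃ w, w ∈ FireS L k ∧ w.1 ≠ u.1 := by
  rw [Pk_succ] at h1
  rcases mem_union.mp h1 with h | h
  · exact absurd h h2
  · obtain ⟨w, hw, hu⟩ := mem_biUnion.mp h
    rw [nbrU, mem_filter, adj_iff] at hu
    exact ⟨w, hw, hu.2.1⟩

lemma mem_FireS {k : ℕ} {w : (i : Fin m) × Fin (n i)} (h : w ∈ FireS L k) :
    0 < L w ∧ w ∉ Fk L k ∧ (nbrU (Pk L k) w).card ≤ L w := by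
  rw [FireS, mem_filter] at h; exact h.2

lemma firer_protects {k : ℕ} {w u : (i : Fin m) × Fin (n i)} (hw : w ∈ FireS L k)
    (h1 : w.1 ≠ u.1) (h2 : u ∉ Pk L k) : u ∈ Pk L (k+1) := by
  rw [Pk_succ]
  refine mem_union_right _ (mem_biUnion.mpr ⟨w, hw, ?_⟩)
  rw [nbrU, mem_filter, adj_iff]
  exact ⟨mem_univ u, h1, h2⟩

/-- The first time a vertex becomes protected. -/
lemma first_prot {x : (i : Fin m) × Fin (n i)} (hx0 : x ∉ Pk L 0) {t : ℕ} (hx : x ∈ Pk L t) :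
    ∃ s, s < t ∧ x ∉ Pk L s ∧ x ∈ Pk L (s + 1) := by
  have hex : ∃ t', x ∈ Pk L (t' + 1) := ⟨t, Pk_subset_succ L t hx⟩
  refine ⟨Nat.find hex, ?_, ?_, Nat.find_spec hex⟩
  · by_contra h
    push_neg at h
    rcases Nat.eq_zero_or_pos t with rfl | ht
    · exact hx0 hx
    · have := Nat.find_min hex (m := t - 1) (by omega)
      rw [show t - 1 + 1 = t by omega] at this
      exact this hx
  · rcases Nat.eq_zero_or_pos (Nat.find hex) with h0 | h0
    · rwa [h0]
    · intro hmem
      have := Nat.find_min hex (m := Nat.find hex - 1) (by omega)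
      rw [show Nat.find hex - 1 + 1 = Nat.find hex by omega] at this
      exact this hmem

theorem core_lemma (hL : DedSuccessful G L) (hU : ∃ u, L u = 0) :
    ∃ v₁ : (i : Fin m) × Fin (n i), 0 < L v₁ ∧
      (univ.filter (fun u => L u = 0 ∧ u.1 ≠ v₁.1)).card ≤ L v₁ ∧
      (univ.filter (fun u => L u = 0 ∧ u.1 ≠ v₁.1)).Nonempty ∧
      ((univ.filter (fun u => L u = 0 ∧ u.1 = v₁.1)) = ∅ ∨
        ∃ w, 0 < L w ∧ w.1 ≠ v₁.1 ∧
          (univ.filter (fun u => L u = 0 ∧ u.1 = v₁.1)).card ≤ L w) := by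
  obtain ⟨K, hK⟩ := hL
  have hK : Pk L K = univ := hK
  obtain ⟨u0, hu0⟩ := hU
  have hu0P : u0 ∉ Pk L 0 := by simp [mem_Pk_zero, hu0]
  -- there is a productive stage
  have hprod : ∃ t, Pk L (t+1) ≠ Pk L t := by
    by_contra h
    push_neg at h
    have h0 : Pk L K = Pk L 0 := Pk_const_of L K (fun s _ => h s)
    rw [hK] at h0
    exact hu0P (h0 ▸ mem_univ u0)
  set t₁ := Nat.find hprod with ht₁def
  have ht₁ : Pk L (t₁+1) ≠ Pk L t₁ := Nat.find_spec hprod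
  have hPt₁ : Pk L t₁ = Pk L 0 := by
    refine Pk_const_of L t₁ (fun s hs => ?_)
    have := Nat.find_min hprod hs
    exact not_not.mp this
  -- get a vertex protected at stage t₁ and its firer
  have hss : Pk L t₁ ⊂ Pk L (t₁+1) := (Pk_subset_succ L t₁).ssubset_of_ne (Ne.symm ht₁)
  obtain ⟨u, huP1, huP0⟩ := exists_of_ssubset hss
  obtain ⟨v₁, hv₁F, hv₁ne⟩ := exists_firer L huP1 huP0
  obtain ⟨hv₁L, -, hv₁card⟩ := mem_FireS L hv₁F
  have hmemP0 : ∀ x : (i : Fin m) × Fin (n i), x ∉ Pk L t₁ ↔ L x = 0 := by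
    intro x
    rw [hPt₁, mem_Pk_zero]
    omega
  have hAeq : nbrU (Pk L t₁) v₁ = univ.filter (fun u => L u = 0 ∧ u.1 ≠ v₁.1) := by
    ext x
    rw [nbrU, mem_filter, mem_filter, adj_iff, hmemP0]
    constructor
    · rintro ⟨h1, h2, h3⟩; exact ⟨h1, h3, Ne.symm h2⟩
    · rintro ⟨h1, h2, h3⟩; exact ⟨h1, Ne.symm h3, h2⟩
  rw [hAeq] at hv₁card
  refine ⟨v₁, hv₁L, hv₁card, ⟨u, ?_⟩, ?_⟩
  · rw [mem_filter]
    exact ⟨mem_univ u, (hmemP0 u).mp huP0, Ne.symm hv₁ne⟩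
  -- the B part
  by_cases hB : (univ.filter (fun u => L u = 0 ∧ u.1 = v₁.1)) = ∅
  · exact Or.inl hB
  right
  obtain ⟨b, hb⟩ := nonempty_of_ne_empty hB
  rw [mem_filter] at hb
  obtain ⟨-, hbL, hbi⟩ := hb
  have hb0 : b ∉ Pk L 0 := by simp [mem_Pk_zero, hbL]
  obtain ⟨t₂, -, hbn2, hbm2⟩ := first_prot L hb0 (t := K) (hK ▸ mem_univ b)
  obtain ⟨w, hwF, hwne⟩ := exists_firer L hbm2 hbn2
  obtain ⟨hwL, -, hwcard⟩ := mem_FireS L hwF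
  rw [hbi] at hwne
  refine ⟨w, hwL, hwne, le_trans (card_le_card ?_) hwcard⟩
  -- B ⊆ nbrU (Pk t₂) w
  intro x hx
  rw [mem_filter] at hx
  obtain ⟨-, hxL, hxi⟩ := hx
  rw [nbrU, mem_filter, adj_iff]
  refine ⟨mem_univ x, by rw [hxi]; exact hwne, ?_⟩
  -- x ∉ Pk t₂
  by_contra hxP
  have hx0 : x ∉ Pk L 0 := by simp [mem_Pk_zero, hxL]
  obtain ⟨s, hst, hxn, hxm⟩ := first_prot L hx0 hxP
  obtain ⟨w', hw'F, hw'ne⟩ := exists_firer L hxm hxn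
  have hbns : b ∉ Pk L s := fun h => hbn2 (Pk_mono L hst.le h)
  have : b ∈ Pk L (s+1) := by
    refine firer_protects L hw'F ?_ hbns
    rw [hbi, ← hxi]; exact hw'ne
  exact hbn2 (Pk_mono L (by omega) this)
lemma card_V : Fintype.card ((i : Fin m) × Fin (n i)) = ∑ i, n i := by
  simp [Fintype.card_sigma]

lemma card_split :
    (univ.filter (fun v => 0 < L v)).card + (univ.filter (fun v => L v = 0)).card
      = ∑ i, n i := by
  have h := Finset.card_filter_add_card_filter_not
    (s := (univ : Finset ((i : Fin m) × Fin (n i)))) (p := fun v => 0 < L v)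
  have he : (univ.filter (fun v : (i : Fin m) × Fin (n i) => ¬ 0 < L v))
      = univ.filter (fun v => L v = 0) := by
    apply filter_congr; intro x _; constructor <;> intro <;> omega
  rw [he, card_univ, card_V] at h
  exact h

lemma card_splitAB (i : Fin m) :
    (univ.filter (fun u : (j : Fin m) × Fin (n j) => L u = 0 ∧ u.1 = i)).card
      + (univ.filter (fun u : (j : Fin m) × Fin (n j) => L u = 0 ∧ u.1 ≠ i)).card
      = (univ.filter (fun v => L v = 0)).card := by
  have h := Finset.card_filter_add_card_filter_not
    (s := univ.filter (fun v : (j : Fin m) × Fin (n j) => L v = 0)) (p := fun u => u.1 = i)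
  rw [filter_filter, filter_filter] at h
  exact h

lemma sum_bound1 {v : (i : Fin m) × Fin (n i)} (hv : 0 < L v) :
    (univ.filter (fun x => 0 < L x)).card - 1 + L v ≤ ∑ x, L x := by
  have h1 : L v + ∑ x ∈ univ.erase v, L x = ∑ x, L x :=
    Finset.add_sum_erase univ L (mem_univ v)
  have h2 : ((univ.filter (fun x => 0 < L x)).erase v).card • 1
      ≤ ∑ x ∈ (univ.filter (fun x => 0 < L x)).erase v, L x :=
    Finset.card_nsmul_le_sum _ _ _ (fun x hx => by
      have := (mem_filter.mp (mem_of_mem_erase hx)).2; omega)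
  have h2' : ∑ x ∈ (univ.filter (fun x => 0 < L x)).erase v, L x
      ≤ ∑ x ∈ univ.erase v, L x :=
    Finset.sum_le_sum_of_subset (erase_subset_erase v (filter_subset _ _))
  have h3 : ((univ.filter (fun x => 0 < L x)).erase v).card
      = (univ.filter (fun x => 0 < L x)).card - 1 :=
    card_erase_of_mem (mem_filter.mpr ⟨mem_univ v, hv⟩)
  simp only [smul_eq_mul, mul_one] at h2
  omega

lemma sum_bound2 {v w : (i : Fin m) × Fin (n i)} (hvw : v ≠ w) (hv : 0 < L v)
    (hw : 0 < L w) :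
    (univ.filter (fun x => 0 < L x)).card - 2 + L v + L w ≤ ∑ x, L x := by
  have h1 : L v + ∑ x ∈ univ.erase v, L x = ∑ x, L x :=
    Finset.add_sum_erase univ L (mem_univ v)
  have hwm : w ∈ univ.erase v := mem_erase.mpr ⟨Ne.symm hvw, mem_univ w⟩
  have h1' : L w + ∑ x ∈ (univ.erase v).erase w, L x = ∑ x ∈ univ.erase v, L x :=
    Finset.add_sum_erase _ L hwm
  have h2 : (((univ.filter (fun x => 0 < L x)).erase v).erase w).card • 1
      ≤ ∑ x ∈ ((univ.filter (fun x => 0 < L x)).erase v).erase w, L x :=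
    Finset.card_nsmul_le_sum _ _ _ (fun x hx => by
      have := (mem_filter.mp (mem_of_mem_erase (mem_of_mem_erase hx))).2; omega)
  have h2' : ∑ x ∈ ((univ.filter (fun x => 0 < L x)).erase v).erase w, L x
      ≤ ∑ x ∈ (univ.erase v).erase w, L x :=
    Finset.sum_le_sum_of_subset
      (erase_subset_erase w (erase_subset_erase v (filter_subset _ _)))
  have h3 : (((univ.filter (fun x => 0 < L x)).erase v).erase w).card
      = (univ.filter (fun x => 0 < L x)).card - 1 - 1 := by
    rw [card_erase_of_mem, card_erase_of_mem (mem_filter.mpr ⟨mem_univ v, hv⟩)]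
    exact mem_erase.mpr ⟨Ne.symm hvw, mem_filter.mpr ⟨mem_univ w, hw⟩⟩
  have h4 : 2 ≤ (univ.filter (fun x => 0 < L x)).card := by
    have : ({v, w} : Finset ((i : Fin m) × Fin (n i))) ⊆ univ.filter (fun x => 0 < L x) := by
      intro x hx
      rcases mem_insert.mp hx with rfl | hx
      · exact mem_filter.mpr ⟨mem_univ _, hv⟩
      · rw [mem_singleton.mp hx]; exact mem_filter.mpr ⟨mem_univ _, hw⟩
    have := card_le_card this
    rwa [card_pair hvw] at this
  simp only [smul_eq_mul, mul_one] at h2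
  omega

lemma eq_of_part_one {i : Fin m} (h : n i = 1) {x y : (j : Fin m) × Fin (n j)}
    (hx : x.1 = i) (hy : y.1 = i) : x = y := by
  rcases x with ⟨xi, xv⟩
  rcases y with ⟨yi, yv⟩
  dsimp at hx hy
  subst hx; subst hy
  have h1 := xv.isLt
  have h2 := yv.isLt
  have : xv = yv := Fin.ext (by omega)
  rw [this]

lemma bound_of_Bempty {v₁ : (i : Fin m) × Fin (n i)} (hv₁ : 0 < L v₁)
    (hcardA : (univ.filter (fun u => L u = 0 ∧ u.1 ≠ v₁.1)).card ≤ L v₁)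
    (hB : (univ.filter (fun u => L u = 0 ∧ u.1 = v₁.1)) = ∅) :
    ∑ i, n i ≤ (∑ v, L v) + 1 := by
  have hAB := card_splitAB L v₁.1
  rw [hB, card_empty] at hAB
  have hSz := card_split L
  have hb1 := sum_bound1 L hv₁
  have hS1 : 1 ≤ (univ.filter (fun x => 0 < L x)).card :=
    card_pos.mpr ⟨v₁, mem_filter.mpr ⟨mem_univ _, hv₁⟩⟩
  omega

theorem lb_general (hL : DedSuccessful G L) : ∑ i, n i ≤ (∑ v, L v) + 2 := by
  by_cases hU : ∃ u, L u = 0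
  · obtain ⟨v₁, hv₁L, hcardA, hAne, hdisj⟩ := core_lemma L hL hU
    rcases hdisj with hB | ⟨w, hwL, hwne, hcardB⟩
    · exact le_trans (bound_of_Bempty L hv₁L hcardA hB) (by omega)
    · have hvw : v₁ ≠ w := fun h => hwne (by rw [h])
      have hb2 := sum_bound2 L hvw hv₁L hwL
      have hAB := card_splitAB L v₁.1
      have hSz := card_split L
      omega
  · push_neg at hU
    have : univ.filter (fun v : (i : Fin m) × Fin (n i) => 0 < L v) = univ := by
      refine filter_true_of_mem (fun x _ => ?_)
      have := hU x; omega
    have hb1 : (univ.filter (fun x : (i : Fin m) × Fin (n i) => 0 < L x)).card • 1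
        ≤ ∑ x, L x := by
      refine le_trans (Finset.card_nsmul_le_sum _ _ _ (fun x hx => ?_))
        (Finset.sum_le_sum_of_subset (filter_subset _ _))
      have := (mem_filter.mp hx).2; omega
    rw [this, card_univ, card_V] at hb1
    simp only [smul_eq_mul, mul_one] at hb1
    omega

theorem lb_special1 (h1 : ∀ i, n i = 1) (hL : DedSuccessful G L) :
    ∑ i, n i ≤ (∑ v, L v) + 1 := by
  by_cases hU : ∃ u, L u = 0
  · obtain ⟨v₁, hv₁L, hcardA, hAne, hdisj⟩ := core_lemma L hL hU
    have hB : (univ.filter (fun u => L u = 0 ∧ u.1 = v₁.1)) = ∅ := by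
      rw [eq_empty_iff_forall_notMem]
      intro b hb
      rw [mem_filter] at hb
      have : b = v₁ := eq_of_part_one (h1 v₁.1) hb.2.2 rfl
      rw [this] at hb; omega
    exact bound_of_Bempty L hv₁L hcardA hB
  · push_neg at hU
    have : univ.filter (fun v : (i : Fin m) × Fin (n i) => 0 < L v) = univ := by
      refine filter_true_of_mem (fun x _ => ?_)
      have := hU x; omega
    have hb1 : (univ.filter (fun x : (i : Fin m) × Fin (n i) => 0 < L x)).card • 1
        ≤ ∑ x, L x := by
      refine le_trans (Finset.card_nsmul_le_sum _ _ _ (fun x hx => ?_))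
        (Finset.sum_le_sum_of_subset (filter_subset _ _))
      have := (mem_filter.mp hx).2; omega
    rw [this, card_univ, card_V] at hb1
    simp only [smul_eq_mul, mul_one] at hb1
    omega

theorem lb_special2 (hm2 : m = 2) {j : Fin m} (hj : n j = 1) (hL : DedSuccessful G L) :
    ∑ i, n i ≤ (∑ v, L v) + 1 := by
  by_cases hU : ∃ u, L u = 0
  · obtain ⟨v₁, hv₁L, hcardA, hAne, hdisj⟩ := core_lemma L hL hU
    have hB : (univ.filter (fun u => L u = 0 ∧ u.1 = v₁.1)) = ∅ := by
      by_cases hv : v₁.1 = j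
      · rw [eq_empty_iff_forall_notMem]
        intro b hb
        rw [mem_filter] at hb
        have : b = v₁ := eq_of_part_one hj (hb.2.2.trans hv) hv
        rw [this] at hb; omega
      · rcases hdisj with hB | ⟨w, hwL, hwne, hcardB⟩
        · exact hB
        · exfalso
          -- w.1 = j
          have hwj : w.1 = j := by
            have e1 : (w.1 : ℕ) ≠ (v₁.1 : ℕ) := fun h => hwne (Fin.ext h)
            have e2 : (j : ℕ) ≠ (v₁.1 : ℕ) := fun h => hv (Fin.ext h.symm)
            have i1 := w.1.isLt
            have i2 := v₁.1.isLt
            have i3 := j.isLt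
            exact Fin.ext (by omega)
          obtain ⟨u, hu⟩ := hAne
          rw [mem_filter] at hu
          have huj : u.1 = j := by
            have e1 : (u.1 : ℕ) ≠ (v₁.1 : ℕ) := fun h => hu.2.2 (Fin.ext h)
            have e2 : (j : ℕ) ≠ (v₁.1 : ℕ) := fun h => hv (Fin.ext h.symm)
            have i1 := u.1.isLt
            have i2 := v₁.1.isLt
            have i3 := j.isLt
            exact Fin.ext (by omega)
          have : u = w := eq_of_part_one hj huj hwj
          rw [this] at hu
          omega
    exact bound_of_Bempty L hv₁L hcardA hB
  · push_neg at hU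
    have : univ.filter (fun v : (i : Fin m) × Fin (n i) => 0 < L v) = univ := by
      refine filter_true_of_mem (fun x _ => ?_)
      have := hU x; omega
    have hb1 : (univ.filter (fun x : (i : Fin m) × Fin (n i) => 0 < L x)).card • 1
        ≤ ∑ x, L x := by
      refine le_trans (Finset.card_nsmul_le_sum _ _ _ (fun x hx => ?_))
        (Finset.sum_le_sum_of_subset (filter_subset _ _))
      have := (mem_filter.mp hx).2; omega
    rw [this, card_univ, card_V] at hb1
    simp only [smul_eq_mul, mul_one] at hb1
    omega
lemma mem_FireS' {LL : ((i : Fin m) × Fin (n i)) → ℕ} {k : ℕ} {w : (i : Fin m) × Fin (n i)}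
    (h : 0 < LL w ∧ w ∉ Fk LL k ∧ (nbrU (Pk LL k) w).card ≤ LL w) : w ∈ FireS LL k := by
  rw [FireS, mem_filter]; exact ⟨mem_univ _, h⟩

lemma Fk_zero (LL : ((i : Fin m) × Fin (n i)) → ℕ) : Fk LL 0 = ∅ := rfl

theorem ub_one {i0 : Fin m} (hi : n i0 = 1) (hN : 2 ≤ ∑ j, n j) :
    ∃ LL : ((i : Fin m) × Fin (n i)) → ℕ,
      (∑ v, LL v) = (∑ j, n j) - 1 ∧ DedSuccessful G LL := by
  have hpos : (0 : ℕ) < n i0 := by omega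
  set v₀ : (i : Fin m) × Fin (n i) := ⟨i0, ⟨0, hpos⟩⟩ with hv₀def
  set LL : ((i : Fin m) × Fin (n i)) → ℕ :=
    fun u => if u = v₀ then (∑ j, n j) - 1 else 0 with hLdef
  have hsum : (∑ v, LL v) = (∑ j, n j) - 1 := by
    rw [hLdef, Finset.sum_ite_eq' univ v₀ (fun _ => (∑ j, n j) - 1)]
    simp
  have hLv₀ : 0 < LL v₀ := by simp [hLdef]; omega
  refine ⟨LL, hsum, 1, ?_⟩
  show Pk LL 1 = univ
  have hfire : v₀ ∈ FireS LL 0 := by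
    refine mem_FireS' ⟨hLv₀, by simp [Fk_zero], ?_⟩
    have hsub : nbrU (Pk LL 0) v₀ ⊆ univ.erase v₀ := by
      intro x hx
      rw [nbrU, mem_filter, adj_iff] at hx
      exact mem_erase.mpr ⟨fun h => hx.2.1 (by rw [h]), mem_univ x⟩
    have := card_le_card hsub
    rw [card_erase_of_mem (mem_univ v₀), card_univ, card_V] at this
    calc (nbrU (Pk LL 0) v₀).card ≤ (∑ j, n j) - 1 := this
      _ ≤ LL v₀ := by simp [hLdef]
  apply eq_univ_iff_forall.mpr
  intro u
  by_cases hu : u = v₀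
  · rw [hu]
    exact Pk_subset_succ LL 0 ((mem_Pk_zero LL v₀).mpr hLv₀)
  · refine firer_protects LL hfire ?_ ?_
    · intro h
      exact hu (eq_of_part_one hi (h.symm) rfl)
    · rw [mem_Pk_zero]
      simp [hLdef, hu]

theorem ub_two {p : Fin m} (hp : 2 ≤ n p) {q : Fin m} (hq : q ≠ p)
    (hsplit : 2 ≤ n q ∨ ∃ r : Fin m, r ≠ p ∧ r ≠ q) (hnall : ∀ i, 1 ≤ n i) :
    ∃ LL : ((i : Fin m) × Fin (n i)) → ℕ,
      (∑ v, LL v) = (∑ j, n j) - 2 ∧ DedSuccessful G LL := by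
  have hqpos : (0 : ℕ) < n q := hnall q
  set a : (i : Fin m) × Fin (n i) := ⟨p, ⟨0, by omega⟩⟩ with hadef
  set b : (i : Fin m) × Fin (n i) := ⟨q, ⟨0, by omega⟩⟩ with hbdef
  set c : (i : Fin m) × Fin (n i) := ⟨p, ⟨1, by omega⟩⟩ with hcdef
  have hab : a ≠ b := by
    intro h
    exact hq (congrArg Sigma.fst h).symm
  have hca : c ≠ a := by
    intro h
    have h2 := congrArg (fun x : (i : Fin m) × Fin (n i) => (x.2 : ℕ)) h
    simp [hcdef, hadef] at h2
  have hcb : c ≠ b := by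
    intro h
    exact hq (congrArg Sigma.fst h).symm
  set LL : ((i : Fin m) × Fin (n i)) → ℕ :=
    fun u => if u = a ∨ u = b then 0 else 1 with hLdef
  have hP0 : ∀ x, x ∈ Pk LL 0 ↔ ¬(x = a ∨ x = b) := by
    intro x
    rw [mem_Pk_zero]
    by_cases h : x = a ∨ x = b <;> simp [hLdef, h]
  have hsum : (∑ v, LL v) = (∑ j, n j) - 2 := by
    rw [hLdef, Finset.sum_ite (f := fun _ => 0) (g := fun _ => 1)]
    rw [Finset.sum_const_zero, Finset.sum_const, smul_eq_mul, mul_one, zero_add]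
    have hfil : univ.filter (fun x : (i : Fin m) × Fin (n i) => x = a ∨ x = b) = {a, b} := by
      ext x; simp [mem_insert, mem_singleton]
    have h := Finset.card_filter_add_card_filter_not
      (s := (univ : Finset ((i : Fin m) × Fin (n i)))) (p := fun x => x = a ∨ x = b)
    rw [hfil, card_pair hab, card_univ, card_V] at h
    omega
  refine ⟨LL, hsum, 2, ?_⟩
  show Pk LL 2 = univ
  -- c fires at stage 0, protecting b
  have hcF : c ∈ FireS LL 0 := by
    refine mem_FireS' ⟨?_, by simp [Fk_zero], ?_⟩
    · simp [hLdef, hca, hcb]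
    · have hsub : nbrU (Pk LL 0) c ⊆ {b} := by
        intro x hx
        rw [nbrU, mem_filter, adj_iff, hP0, not_not] at hx
        rcases hx.2.2 with rfl | rfl
        · exact absurd rfl hx.2.1
        · exact mem_singleton_self _
      have := card_le_card hsub
      rw [card_singleton] at this
      calc (nbrU (Pk LL 0) c).card ≤ 1 := this
        _ ≤ LL c := by simp [hLdef, hca, hcb]
  have hb1 : b ∈ Pk LL 1 := by
    refine firer_protects LL hcF (by exact fun h => hq h.symm) ?_
    rw [hP0, not_not]; exact Or.inr rfl
  have ha2 : a ∈ Pk LL 2 := by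
    rcases hsplit with hnq | ⟨r, hrp, hrq⟩
    · -- part q has a second vertex e which fires at stage 0
      set e : (i : Fin m) × Fin (n i) := ⟨q, ⟨1, by omega⟩⟩ with hedef
      have hea : e ≠ a := fun h => hq (congrArg Sigma.fst h)
      have heb : e ≠ b := by
        intro h
        have h2 := congrArg (fun x : (i : Fin m) × Fin (n i) => (x.2 : ℕ)) h
        simp [hedef, hbdef] at h2
      have heF : e ∈ FireS LL 0 := by
        refine mem_FireS' ⟨?_, by simp [Fk_zero], ?_⟩
        · simp [hLdef, hea, heb]
        · have hsub : nbrU (Pk LL 0) e ⊆ {a} := by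
            intro x hx
            rw [nbrU, mem_filter, adj_iff, hP0, not_not] at hx
            rcases hx.2.2 with rfl | rfl
            · exact mem_singleton_self _
            · exact absurd rfl hx.2.1
          have := card_le_card hsub
          rw [card_singleton] at this
          calc (nbrU (Pk LL 0) e).card ≤ 1 := this
            _ ≤ LL e := by simp [hLdef, hea, heb]
      refine Pk_mono LL (by omega) (j := 1) ?_
      refine firer_protects LL heF (by exact hq) ?_
      rw [hP0, not_not]; exact Or.inl rfl
    · by_cases ha1 : a ∈ Pk LL 1
      · exact Pk_subset_succ LL 1 ha1
      · set d : (i : Fin m) × Fin (n i) := ⟨r, ⟨0, by have := hnall r; omega⟩⟩ with hddef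
        have hda : d ≠ a := fun h => hrp (congrArg Sigma.fst h)
        have hdb : d ≠ b := fun h => hrq (congrArg Sigma.fst h)
        have hdF : d ∈ FireS LL 1 := by
          refine mem_FireS' ⟨?_, ?_, ?_⟩
          · simp [hLdef, hda, hdb]
          · rw [Fk_succ, Fk_zero, empty_union]
            intro hd
            have hcard := (mem_FireS LL hd).2.2
            have hsub : ({a, b} : Finset ((i : Fin m) × Fin (n i))) ⊆ nbrU (Pk LL 0) d := by
              intro x hx
              rw [nbrU, mem_filter, adj_iff, hP0, not_not]
              rcases mem_insert.mp hx with rfl | hx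
              · exact ⟨mem_univ _, by exact hrp, Or.inl rfl⟩
              · rw [mem_singleton.mp hx]
                exact ⟨mem_univ _, by exact hrq, Or.inr rfl⟩
            have h2 := card_le_card hsub
            rw [card_pair hab] at h2
            have : LL d = 1 := by simp [hLdef, hda, hdb]
            omega
          · have hsub : nbrU (Pk LL 1) d ⊆ {a} := by
              intro x hx
              rw [nbrU, mem_filter, adj_iff] at hx
              have hx0 : x ∉ Pk LL 0 := fun h => hx.2.2 (Pk_subset_succ LL 0 h)
              rw [hP0, not_not] at hx0
              rcases hx0 with rfl | rfl
              · exact mem_singleton_self _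
              · exact absurd hb1 hx.2.2
            have := card_le_card hsub
            rw [card_singleton] at this
            calc (nbrU (Pk LL 1) d).card ≤ 1 := this
              _ ≤ LL d := by simp [hLdef, hda, hdb]
        exact firer_protects LL hdF (by exact hrp) ha1
  apply eq_univ_iff_forall.mpr
  intro u
  by_cases hu : u = a ∨ u = b
  · rcases hu with rfl | rfl
    · exact ha2
    · exact Pk_mono LL (by omega) hb1
  · exact Pk_mono LL (by omega) (j := 0) ((hP0 u).mpr hu)
end

theorem deduction_completeMultipartite (m : ℕ) (hm : 2 ≤ m) (n : Fin m → ℕ)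
    (hn : ∀ i, 1 ≤ n i) :
    deductionNumber (SimpleGraph.completeMultipartiteGraph (fun i : Fin m => Fin (n i))) =
      if (∀ i, n i = 1) ∨ (m = 2 ∧ ∃ i, n i = 1) then (∑ i, n i) - 1
      else (∑ i, n i) - 2 := by
  have hN : m ≤ ∑ i, n i := by
    have h := Finset.card_nsmul_le_sum univ n 1 (fun i _ => hn i)
    simpa using h
  unfold deductionNumber
  by_cases hsp : (∀ i, n i = 1) ∨ (m = 2 ∧ ∃ i, n i = 1)
  · rw [if_pos hsp]
    have hex1 : ∃ i0 : Fin m, n i0 = 1 := by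
      rcases hsp with h | ⟨-, h⟩
      · exact ⟨⟨0, by omega⟩, h _⟩
      · exact h
    obtain ⟨i0, hi0⟩ := hex1
    obtain ⟨LL, hsum, hsucc⟩ :=
      @ub_one m n (Classical.decEq _) (Classical.decRel _) i0 hi0 (by omega)
    apply le_antisymm
    · exact Nat.sInf_le ⟨LL, hsum, hsucc⟩
    · refine le_csInf ⟨_, LL, hsum, hsucc⟩ ?_
      rintro x ⟨L', rfl, hsucc'⟩
      have hlb : ∑ i, n i ≤ (∑ v, L' v) + 1 := by
        rcases hsp with h | ⟨hm2, j, hj⟩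
        · exact @lb_special1 m n (Classical.decEq _) (Classical.decRel _) L' h hsucc'
        · exact @lb_special2 m n (Classical.decEq _) (Classical.decRel _) L' hm2 j hj hsucc'
      omega
  · rw [if_neg hsp]
    push_neg at hsp
    obtain ⟨hA, hB⟩ := hsp
    obtain ⟨p, hp1⟩ := hA
    have hp : 2 ≤ n p := by have := hn p; omega
    set z0 : Fin m := ⟨0, by omega⟩ with hz0
    set z1 : Fin m := ⟨1, by omega⟩ with hz1
    set q : Fin m := if p = z0 then z1 else z0 with hqdef
    have hq : q ≠ p := by
      rw [hqdef]
      by_cases h : p = z0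
      · rw [if_pos h, h]
        exact fun hh => by
          have := congrArg Fin.val hh
          simp [hz0, hz1] at this
      · rw [if_neg h]
        exact fun hh => h hh.symm
    have hsplit : 2 ≤ n q ∨ ∃ r : Fin m, r ≠ p ∧ r ≠ q := by
      rcases Nat.lt_or_ge m 3 with h3 | h3
      · left
        have hm2 : m = 2 := by omega
        have := hB hm2
        have := this q
        have := hn q
        omega
      · right
        have hne : ((univ : Finset (Fin m)) \ {p, q}).Nonempty := by
          apply Finset.card_pos.mp
          rw [Finset.card_sdiff_of_subset (Finset.subset_univ _), Finset.card_univ, Fintype.card_fin]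
          have : ({p, q} : Finset (Fin m)).card ≤ 2 :=
            le_trans (Finset.card_insert_le _ _) (by simp)
          omega
        obtain ⟨r, hr⟩ := hne
        rw [Finset.mem_sdiff, Finset.mem_insert, Finset.mem_singleton] at hr
        push_neg at hr
        exact ⟨r, hr.2.1, hr.2.2⟩
    obtain ⟨LL, hsum, hsucc⟩ :=
      @ub_two m n (Classical.decEq _) (Classical.decRel _) p hp q hq hsplit hn
    apply le_antisymm
    · exact Nat.sInf_le ⟨LL, hsum, hsucc⟩
    · refine le_csInf ⟨_, LL, hsum, hsucc⟩ ?_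
      rintro x ⟨L', rfl, hsucc'⟩
      have hlb := @lb_general m n (Classical.decEq _) (Classical.decRel _) L' hsucc'
      omega
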